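/- Let S = k[x_0,…,x_n] be a graded polynomial ring, f homogeneous of degree d, R = S/(f), and M = coker(s^0) for a reduced graded matrix factorization (F^0, F^1, s^0, s^1) of f (reduced means s^0 ⊗ k = 0 = s^1 ⊗ k). Then the minimal graded free resolution of M over R is 2-periodic up to twist: ⋯ → F^0(−d)⊗R → F^1(−d)⊗R → F^0⊗R → F^1⊗R → M → 0, with differentials alternately induced by s^0 and s^1. -/
import Mathlib


open MvPolynomial

/-- Let `S = k[x₀, …, xₙ]`, `f` homogeneous of degree `d`, `R = S/(f)`, and
`(F⁰, F¹, s⁰, s¹)` a reduced graded matrix factorization of `f` (reducedness: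
the entries of `s⁰` and `s¹` lie in the homogeneous maximal ideal
`𝔪 = (x₀, …, xₙ)`, i.e. `s⁰ ⊗ k = 0 = s¹ ⊗ k`), and `M = coker s⁰`.  Then the
2-periodic complex `⋯ → F⁰⊗R → F¹⊗R → F⁰⊗R → F¹⊗R → M → 0`, with differentials
alternately induced by `s⁰` and `s¹`, is exact and minimal (its differentials
have entries in `𝔪`): it is the minimal free resolution of `M` over `R`
(the grading twists `(−d)` only shift degrees of the underlying modules). -/
theorem reduced_matrixFactorization_minimal_free_resolution
    (k : Type*) [Field k] (n d : ℕ)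
    (f : MvPolynomial (Fin (n + 1)) k)
    (hfhom : f ∈ homogeneousSubmodule (Fin (n + 1)) k d) (hf0 : f ≠ 0)
    (F0 F1 : Type*)
    [AddCommGroup F0] [Module (MvPolynomial (Fin (n + 1)) k) F0]
    [Module.Free (MvPolynomial (Fin (n + 1)) k) F0]
    [Module.Finite (MvPolynomial (Fin (n + 1)) k) F0]
    [AddCommGroup F1] [Module (MvPolynomial (Fin (n + 1)) k) F1]
    [Module.Free (MvPolynomial (Fin (n + 1)) k) F1]
    [Module.Finite (MvPolynomial (Fin (n + 1)) k) F1]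
    (s0 : F0 →ₗ[MvPolynomial (Fin (n + 1)) k] F1)
    (s1 : F1 →ₗ[MvPolynomial (Fin (n + 1)) k] F0)
    (h10 : s1 ∘ₗ s0 = f • (LinearMap.id : F0 →ₗ[MvPolynomial (Fin (n + 1)) k] F0))
    (h01 : s0 ∘ₗ s1 = f • (LinearMap.id : F1 →ₗ[MvPolynomial (Fin (n + 1)) k] F1))
    -- reducedness: entries of `s⁰`, `s¹` lie in the irrelevant maximal ideal `𝔪`
    (hred0 : LinearMap.range s0 ≤
      (Ideal.span (Set.range (X : Fin (n + 1) → MvPolynomial (Fin (n + 1)) k))) •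
        (⊤ : Submodule (MvPolynomial (Fin (n + 1)) k) F1))
    (hred1 : LinearMap.range s1 ≤
      (Ideal.span (Set.range (X : Fin (n + 1) → MvPolynomial (Fin (n + 1)) k))) •
        (⊤ : Submodule (MvPolynomial (Fin (n + 1)) k) F0)) :
    let S := MvPolynomial (Fin (n + 1)) k
    let 𝔪 : Ideal S := Ideal.span (Set.range X)
    let I : Ideal S := Ideal.span {f}
    let T0 : Submodule S F0 := I • ⊤
    let T1 : Submodule S F1 := I • ⊤
    let s0bar : (F0 ⧸ T0) →ₗ[S] (F1 ⧸ T1) := Submodule.mapQ T0 T1 s0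
      (by rw [← Submodule.map_le_iff_le_comap, Submodule.map_smul'']
          exact Submodule.smul_mono le_rfl le_top)
    let s1bar : (F1 ⧸ T1) →ₗ[S] (F0 ⧸ T0) := Submodule.mapQ T1 T0 s1
      (by rw [← Submodule.map_le_iff_le_comap, Submodule.map_smul'']
          exact Submodule.smul_mono le_rfl le_top)
    let π : (F1 ⧸ T1) →ₗ[S] (F1 ⧸ LinearMap.range s0) :=
      Submodule.mapQ T1 (LinearMap.range s0) LinearMap.id
      (by rw [← Submodule.map_le_iff_le_comap, Submodule.map_id]
          refine Submodule.smul_le.2 fun r hr m _ => ?_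
          obtain ⟨c, rfl⟩ := Ideal.mem_span_singleton'.mp hr
          refine ⟨c • s1 m, ?_⟩
          have hm := congrFun (congrArg DFunLike.coe h01) m
          simp only [LinearMap.comp_apply, LinearMap.smul_apply, LinearMap.id_apply] at hm
          rw [map_smul, hm, mul_smul])
    -- exactness of `⋯ → F⁰⊗R → F¹⊗R → F⁰⊗R → F¹⊗R → M → 0`
    (Function.Exact s0bar π ∧ Function.Surjective π ∧
      Function.Exact s1bar s0bar ∧ Function.Exact s0bar s1bar) ∧
    -- minimality of the resolution
    (LinearMap.range s0bar ≤ 𝔪 • (⊤ : Submodule S (F1 ⧸ T1)) ∧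
      LinearMap.range s1bar ≤ 𝔪 • (⊤ : Submodule S (F0 ⧸ T0))) := by
  intro S 𝔪 I T0 T1 s0bar s1bar π
  have h10' : ∀ x : F0, s1 (s0 x) = f • x := fun x => by
    have := congrFun (congrArg DFunLike.coe h10) x; simpa using this
  have h01' : ∀ x : F1, s0 (s1 x) = f • x := fun x => by
    have := congrFun (congrArg DFunLike.coe h01) x; simpa using this
  have memT0 : ∀ x : F0, x ∈ T0 ↔ ∃ y, f • y = x := by
    intro x
    constructor
    · intro hx
      refine Submodule.smul_induction_on hx ?_ ?_
      · rintro r hr m -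
        obtain ⟨c, rfl⟩ := Ideal.mem_span_singleton'.mp hr
        exact ⟨c • m, by rw [smul_smul, mul_comm]⟩
      · rintro a b ⟨y, rfl⟩ ⟨z, rfl⟩; exact ⟨y + z, by rw [smul_add]⟩
    · rintro ⟨y, rfl⟩
      exact Submodule.smul_mem_smul (Ideal.mem_span_singleton_self f) trivial
  have memT1 : ∀ x : F1, x ∈ T1 ↔ ∃ y, f • y = x := by
    intro x
    constructor
    · intro hx
      refine Submodule.smul_induction_on hx ?_ ?_
      · rintro r hr m -
        obtain ⟨c, rfl⟩ := Ideal.mem_span_singleton'.mp hr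
        exact ⟨c • m, by rw [smul_smul, mul_comm]⟩
      · rintro a b ⟨y, rfl⟩ ⟨z, rfl⟩; exact ⟨y + z, by rw [smul_add]⟩
    · rintro ⟨y, rfl⟩
      exact Submodule.smul_mem_smul (Ideal.mem_span_singleton_self f) trivial
  have hT1le : T1 ≤ LinearMap.range s0 := by
    intro x hx
    obtain ⟨y, rfl⟩ := (memT1 x).mp hx
    exact ⟨s1 y, h01' y⟩
  have hcancel0 : ∀ x y : F0, f • x = f • y → x = y := fun x y h =>
    smul_right_injective F0 hf0 h
  have hcancel1 : ∀ x y : F1, f • x = f • y → x = y := fun x y h =>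
    smul_right_injective F1 hf0 h
  refine ⟨⟨?_, ?_, ?_, ?_⟩, ?_, ?_⟩
  · -- Exact s0bar π
    intro y
    obtain ⟨x, rfl⟩ := Submodule.Quotient.mk_surjective T1 y
    rw [show π (Submodule.Quotient.mk x) = Submodule.Quotient.mk x from
      Submodule.mapQ_apply _ _ _ x]
    constructor
    · intro h
      obtain ⟨w, rfl⟩ := Submodule.Quotient.mk_eq_zero _ |>.mp h
      exact ⟨Submodule.Quotient.mk w, Submodule.mapQ_apply _ _ _ w⟩
    · rintro ⟨z, hz⟩
      obtain ⟨w, rfl⟩ := Submodule.Quotient.mk_surjective T0 z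
      rw [Submodule.mapQ_apply] at hz
      have hsub : s0 w - x ∈ T1 := (Submodule.Quotient.eq _).mp hz
      have : x ∈ LinearMap.range s0 := by
        have h1 : s0 w - x ∈ LinearMap.range s0 := hT1le hsub
        have h2 : s0 w ∈ LinearMap.range s0 := ⟨w, rfl⟩
        simpa using sub_mem h2 h1
      exact (Submodule.Quotient.mk_eq_zero _).mpr this
  · -- Surjective π
    intro y
    obtain ⟨x, rfl⟩ := Submodule.Quotient.mk_surjective _ y
    exact ⟨Submodule.Quotient.mk x, Submodule.mapQ_apply _ _ _ x⟩
  · -- Exact s1bar s0bar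
    intro y
    obtain ⟨x, rfl⟩ := Submodule.Quotient.mk_surjective T0 y
    rw [show s0bar (Submodule.Quotient.mk x) = Submodule.Quotient.mk (s0 x) from
      Submodule.mapQ_apply _ _ _ x]
    constructor
    · intro h
      have hx : s0 x ∈ T1 := (Submodule.Quotient.mk_eq_zero _).mp h
      obtain ⟨z, hz⟩ := (memT1 _).mp hx
      have : f • s1 z = f • x := by rw [← h10' x, ← hz, map_smul]
      have hxz : x = s1 z := (hcancel0 _ _ this).symm
      exact ⟨Submodule.Quotient.mk z, by rw [Submodule.mapQ_apply, ← hxz]⟩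
    · rintro ⟨z, hz⟩
      obtain ⟨w, rfl⟩ := Submodule.Quotient.mk_surjective T1 z
      rw [Submodule.mapQ_apply] at hz
      have hsub : s1 w - x ∈ T0 := (Submodule.Quotient.eq _).mp hz
      obtain ⟨u, hu⟩ := (memT0 _).mp hsub
      have key : s0 x = f • (w - s0 u) := by
        have h3 : f • w - s0 x = f • s0 u := by
          rw [← map_smul, hu, map_sub, h01']
        rw [smul_sub, ← h3, sub_sub_cancel]
      exact (Submodule.Quotient.mk_eq_zero _).mpr ((memT1 _).mpr ⟨w - s0 u, key.symm⟩)
  · -- Exact s0bar s1bar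
    intro y
    obtain ⟨x, rfl⟩ := Submodule.Quotient.mk_surjective T1 y
    rw [show s1bar (Submodule.Quotient.mk x) = Submodule.Quotient.mk (s1 x) from
      Submodule.mapQ_apply _ _ _ x]
    constructor
    · intro h
      have hx : s1 x ∈ T0 := (Submodule.Quotient.mk_eq_zero _).mp h
      obtain ⟨z, hz⟩ := (memT0 _).mp hx
      have : f • s0 z = f • x := by rw [← h01' x, ← hz, map_smul]
      have hxz : x = s0 z := (hcancel1 _ _ this).symm
      exact ⟨Submodule.Quotient.mk z, by rw [Submodule.mapQ_apply, ← hxz]⟩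
    · rintro ⟨z, hz⟩
      obtain ⟨w, rfl⟩ := Submodule.Quotient.mk_surjective T0 z
      rw [Submodule.mapQ_apply] at hz
      have hsub : s0 w - x ∈ T1 := (Submodule.Quotient.eq _).mp hz
      obtain ⟨u, hu⟩ := (memT1 _).mp hsub
      have key : s1 x = f • (w - s1 u) := by
        have h3 : f • w - s1 x = f • s1 u := by
          rw [← map_smul, hu, map_sub, h10']
        rw [smul_sub, ← h3, sub_sub_cancel]
      exact (Submodule.Quotient.mk_eq_zero _).mpr ((memT0 _).mpr ⟨w - s1 u, key.symm⟩)
  · -- minimality s0bar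
    rintro y ⟨z, rfl⟩
    obtain ⟨x, rfl⟩ := Submodule.Quotient.mk_surjective T0 z
    rw [Submodule.mapQ_apply]
    have hmem : Submodule.Quotient.mk (s0 x) ∈
        Submodule.map (Submodule.mkQ T1) (𝔪 • (⊤ : Submodule S F1)) :=
      ⟨s0 x, hred0 ⟨x, rfl⟩, rfl⟩
    rw [Submodule.map_smul''] at hmem
    exact Submodule.smul_mono le_rfl le_top hmem
  · -- minimality s1bar
    rintro y ⟨z, rfl⟩
    obtain ⟨x, rfl⟩ := Submodule.Quotient.mk_surjective T1 z
    rw [Submodule.mapQ_apply]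
    have hmem : Submodule.Quotient.mk (s1 x) ∈
        Submodule.map (Submodule.mkQ T0) (𝔪 • (⊤ : Submodule S F0)) :=
      ⟨s1 x, hred1 ⟨x, rfl⟩, rfl⟩
    rw [Submodule.map_smul''] at hmem
    exact Submodule.smul_mono le_rfl le_top hmem
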